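/- Let a < b, ε > 0, τ > 0, let F : ℝ → ℝ be continuously differentiable with f := −F', and let g : ℝ → ℝ be continuous with g(s) ≥ σ > 0 for all s. Let u ∈ C²([a,b]×[0,∞)) satisfy τ·u_tt + g(u)·u_t = ε²·u_xx + f(u) with Neumann boundary conditions u_x(a,t) = u_x(b,t) = 0 for all t > 0, and define E[u,u_t](t) := ∫_a^b [ (τ/2)·u_t(x,t)² + (ε²/2)·u_x(x,t)² + F(u(x,t)) ] dx. Then for every 0 ≤ T₁ ≤ T₂: E[u,u_t](T₁) − E[u,u_t](T₂) ≥ σ·∫_{T₁}^{T₂} ∫_a^b u_t(x,t)² dx dt ≥ 0; in particular t ↦ E[u,u_t](t) is nonincreasing. -/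

import Mathlib

set_option maxHeartbeats 1000000

open MeasureTheory intervalIntegral

/-- slice derivative in the second variable. -/
lemma slice_right {E : Type*} [NormedAddCommGroup E] [NormedSpace ℝ E]
    {G : ℝ × ℝ → E} {G' : ℝ × ℝ →L[ℝ] E} {Q : Set (ℝ × ℝ)} {S : Set ℝ} {x t : ℝ}
    (hG : HasFDerivWithinAt G G' Q (x, t)) (hmaps : Set.MapsTo (fun s : ℝ => (x, s)) S Q) :
    HasDerivWithinAt (fun s => G (x, s)) (G' (0, 1)) S t := by
  have hc : HasDerivWithinAt (fun s : ℝ => ((x, s) : ℝ × ℝ)) (0, 1) S t :=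
    ((hasDerivAt_const t x).prodMk (hasDerivAt_id t)).hasDerivWithinAt
  exact hG.comp_hasDerivWithinAt t hc hmaps

/-- slice derivative in the first variable. -/
lemma slice_left {E : Type*} [NormedAddCommGroup E] [NormedSpace ℝ E]
    {G : ℝ × ℝ → E} {G' : ℝ × ℝ →L[ℝ] E} {Q : Set (ℝ × ℝ)} {S : Set ℝ} {x t : ℝ}
    (hG : HasFDerivWithinAt G G' Q (x, t)) (hmaps : Set.MapsTo (fun y : ℝ => (y, t)) S Q) :
    HasDerivWithinAt (fun y => G (y, t)) (G' (1, 0)) S x := by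
  have hc : HasDerivWithinAt (fun y : ℝ => ((y, t) : ℝ × ℝ)) (1, 0) S x :=
    ((hasDerivAt_id x).prodMk (hasDerivAt_const x t)).hasDerivWithinAt
  exact hG.comp_hasDerivWithinAt x hc hmaps


open MeasureTheory intervalIntegral

/-- The energy `E[u,u_t](t) := ∫_a^b [ (τ/2) u_t² + (ε²/2) u_x² + F(u) ] dx`. -/
noncomputable def classicalEnergy (F : ℝ → ℝ) (τ ε a b : ℝ)
    (ux ut : ℝ → ℝ → ℝ) (u : ℝ → ℝ → ℝ) (t : ℝ) : ℝ :=
  ∫ x in a..b, τ / 2 * (ut x t) ^ 2 + ε ^ 2 / 2 * (ux x t) ^ 2 + F (u x t)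

/-- Energy dissipation inequality: for a classical solution of
`τ u_tt + g(u) u_t = ε² u_xx + f(u)` (`f := -F'`, `g ≥ σ > 0`) on `[a,b] × [0,∞)`
with Neumann boundary conditions, for all `0 ≤ T₁ ≤ T₂`,
`E(T₁) - E(T₂) ≥ σ ∫_{T₁}^{T₂} ∫_a^b u_t² ≥ 0`; in particular `E` is nonincreasing
on `[0,∞)`. -/
theorem energy_dissipation
    (a b ε τ σ : ℝ) (hab : a < b) (hε : 0 < ε) (hτ : 0 < τ) (hσ : 0 < σ)
    (g F : ℝ → ℝ) (hg : Continuous g) (hglb : ∀ s, σ ≤ g s) (hF : ContDiff ℝ 1 F)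
    (u ux ut uxx utt : ℝ → ℝ → ℝ)
    (hC2 : ContDiffOn ℝ 2 (fun p : ℝ × ℝ => u p.1 p.2)
      (Set.Icc a b ×ˢ Set.Ici 0))
    (hux : ∀ x ∈ Set.Icc a b, ∀ t ∈ Set.Ici (0:ℝ),
      HasDerivAt (fun y => u y t) (ux x t) x)
    (hut : ∀ x ∈ Set.Icc a b, ∀ t ∈ Set.Ici (0:ℝ),
      HasDerivAt (fun s => u x s) (ut x t) t)
    (huxx : ∀ x ∈ Set.Icc a b, ∀ t ∈ Set.Ici (0:ℝ),
      HasDerivAt (fun y => ux y t) (uxx x t) x)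
    (hutt : ∀ x ∈ Set.Icc a b, ∀ t ∈ Set.Ici (0:ℝ),
      HasDerivAt (fun s => ut x s) (utt x t) t)
    (hpde : ∀ x ∈ Set.Icc a b, ∀ t ∈ Set.Ici (0:ℝ),
      τ * utt x t + g (u x t) * ut x t = ε ^ 2 * uxx x t + -(deriv F (u x t)))
    (hbc : ∀ t > (0:ℝ), ux a t = 0 ∧ ux b t = 0) :
    (∀ T₁ T₂ : ℝ, 0 ≤ T₁ → T₁ ≤ T₂ →
      σ * (∫ t in T₁..T₂, ∫ x in a..b, (ut x t) ^ 2)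
          ≤ classicalEnergy F τ ε a b ux ut u T₁
            - classicalEnergy F τ ε a b ux ut u T₂ ∧
      0 ≤ σ * ∫ t in T₁..T₂, ∫ x in a..b, (ut x t) ^ 2) ∧
    AntitoneOn (classicalEnergy F τ ε a b ux ut u) (Set.Ici 0) := by
  set Q : Set (ℝ × ℝ) := Set.Icc a b ×ˢ Set.Ici (0:ℝ) with hQdef
  set U : ℝ × ℝ → ℝ := fun p => u p.1 p.2 with hUdef
  have hmemQ : ∀ {x t : ℝ}, x ∈ Set.Icc a b → t ∈ Set.Ici (0:ℝ) → (x, t) ∈ Q :=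
    fun hx ht => ⟨hx, ht⟩
  have hQu : UniqueDiffOn ℝ Q := by
    apply uniqueDiffOn_convex ((convex_Icc a b).prod (convex_Ici 0))
    rw [hQdef, interior_prod_eq, interior_Icc, interior_Ici]
    exact ⟨((a + b) / 2, 1), ⟨by constructor <;> linarith, by norm_num⟩⟩
  have hclos : Q ⊆ closure (interior Q) := by
    rw [hQdef, interior_prod_eq, interior_Icc, interior_Ici, closure_prod_eq,
      closure_Ioo hab.ne, closure_Ioi]
  set L : ℝ × ℝ → (ℝ × ℝ →L[ℝ] ℝ) := fderivWithin ℝ U Q with hLdef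
  set M : ℝ × ℝ → (ℝ × ℝ →L[ℝ] (ℝ × ℝ →L[ℝ] ℝ)) := fderivWithin ℝ L Q with hMdef
  have hdiffU : DifferentiableOn ℝ U Q := hC2.differentiableOn two_ne_zero
  have hL : ContDiffOn ℝ 1 L Q := hC2.fderivWithin hQu (by norm_num)
  have hLdiff : DifferentiableOn ℝ L Q := hL.differentiableOn one_ne_zero
  have hLcont : ContinuousOn L Q := hL.continuousOn
  have hMcont : ContinuousOn M Q := hL.continuousOn_fderivWithin hQu le_rfl
  set m : ℝ → ℝ → ℝ := fun x t => M (x, t) (0, 1) (1, 0) with hmdef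
  -- first order identities
  have hux_eq : ∀ {x t : ℝ}, x ∈ Set.Icc a b → t ∈ Set.Ici (0:ℝ) →
      L (x, t) (1, 0) = ux x t := by
    intro x t hx ht
    have h1 : HasDerivWithinAt (fun y => u y t) (L (x, t) (1, 0)) (Set.Icc a b) x :=
      slice_left (hdiffU (x, t) (hmemQ hx ht)).hasFDerivWithinAt
        (fun y hy => hmemQ hy ht)
    have h2 : HasDerivWithinAt (fun y => u y t) (ux x t) (Set.Icc a b) x :=
      (hux x hx t ht).hasDerivWithinAt
    rw [← h1.derivWithin (uniqueDiffOn_Icc hab x hx),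
      h2.derivWithin (uniqueDiffOn_Icc hab x hx)]
  have hut_eq : ∀ {x t : ℝ}, x ∈ Set.Icc a b → t ∈ Set.Ici (0:ℝ) →
      L (x, t) (0, 1) = ut x t := by
    intro x t hx ht
    have h1 : HasDerivWithinAt (fun s => u x s) (L (x, t) (0, 1)) (Set.Ici 0) t :=
      slice_right (hdiffU (x, t) (hmemQ hx ht)).hasFDerivWithinAt
        (fun s hs => hmemQ hx hs)
    have h2 : HasDerivWithinAt (fun s => u x s) (ut x t) (Set.Ici 0) t :=
      (hut x hx t ht).hasDerivWithinAt
    rw [← h1.derivWithin (uniqueDiffOn_Ici 0 t ht),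
      h2.derivWithin (uniqueDiffOn_Ici 0 t ht)]
  -- second order slice derivatives
  have hux_t : ∀ {x t : ℝ}, x ∈ Set.Icc a b → t ∈ Set.Ici (0:ℝ) →
      HasDerivWithinAt (fun s => ux x s) (m x t) (Set.Ici 0) t := by
    intro x t hx ht
    have h1 : HasDerivWithinAt (fun s => L (x, s)) (M (x, t) (0, 1)) (Set.Ici 0) t :=
      slice_right (hLdiff (x, t) (hmemQ hx ht)).hasFDerivWithinAt
        (fun s hs => hmemQ hx hs)
    have h2 := h1.clm_apply (hasDerivWithinAt_const t (Set.Ici (0:ℝ)) ((1:ℝ), (0:ℝ)))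
    simp only [map_zero, add_zero] at h2
    exact h2.congr (fun s hs => (hux_eq hx hs).symm) (hux_eq hx ht).symm
  have hut_x : ∀ {x t : ℝ}, x ∈ Set.Icc a b → t ∈ Set.Ici (0:ℝ) →
      HasDerivWithinAt (fun y => ut y t) (M (x, t) (1, 0) (0, 1)) (Set.Icc a b) x := by
    intro x t hx ht
    have h1 : HasDerivWithinAt (fun y => L (y, t)) (M (x, t) (1, 0)) (Set.Icc a b) x :=
      slice_left (hLdiff (x, t) (hmemQ hx ht)).hasFDerivWithinAt
        (fun y hy => hmemQ hy ht)
    have h2 := h1.clm_apply (hasDerivWithinAt_const x (Set.Icc a b) ((0:ℝ), (1:ℝ)))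
    simp only [map_zero, add_zero] at h2
    exact h2.congr (fun y hy => (hut_eq hy ht).symm) (hut_eq hx ht).symm
  have hsymm : ∀ {x t : ℝ}, x ∈ Set.Icc a b → t ∈ Set.Ici (0:ℝ) →
      M (x, t) (1, 0) (0, 1) = m x t := by
    intro x t hx ht
    have h := (hC2 (x, t) (hmemQ hx ht)).isSymmSndFDerivWithinAt (by simp) hQu
      (hclos (hmemQ hx ht)) (hmemQ hx ht)
    exact h (1, 0) (0, 1)
  have hutt_eq : ∀ {x t : ℝ}, x ∈ Set.Icc a b → t ∈ Set.Ici (0:ℝ) →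
      utt x t = M (x, t) (0, 1) (0, 1) := by
    intro x t hx ht
    have h1 : HasDerivWithinAt (fun s => L (x, s)) (M (x, t) (0, 1)) (Set.Ici 0) t :=
      slice_right (hLdiff (x, t) (hmemQ hx ht)).hasFDerivWithinAt
        (fun s hs => hmemQ hx hs)
    have h2 := h1.clm_apply (hasDerivWithinAt_const t (Set.Ici (0:ℝ)) ((0:ℝ), (1:ℝ)))
    simp only [map_zero, add_zero] at h2
    have h3 : HasDerivWithinAt (fun s => ut x s) (M (x, t) (0, 1) (0, 1)) (Set.Ici 0) t :=
      h2.congr (fun s hs => (hut_eq hx hs).symm) (hut_eq hx ht).symm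
    have h4 : HasDerivWithinAt (fun s => ut x s) (utt x t) (Set.Ici 0) t :=
      (hutt x hx t ht).hasDerivWithinAt
    rw [← h4.derivWithin (uniqueDiffOn_Ici 0 t ht),
      h3.derivWithin (uniqueDiffOn_Ici 0 t ht)]
  have huxx_eq : ∀ {x t : ℝ}, x ∈ Set.Icc a b → t ∈ Set.Ici (0:ℝ) →
      uxx x t = M (x, t) (1, 0) (1, 0) := by
    intro x t hx ht
    have h1 : HasDerivWithinAt (fun y => L (y, t)) (M (x, t) (1, 0)) (Set.Icc a b) x :=
      slice_left (hLdiff (x, t) (hmemQ hx ht)).hasFDerivWithinAt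
        (fun y hy => hmemQ hy ht)
    have h2 := h1.clm_apply (hasDerivWithinAt_const x (Set.Icc a b) ((1:ℝ), (0:ℝ)))
    simp only [map_zero, add_zero] at h2
    have h3 : HasDerivWithinAt (fun y => ux y t) (M (x, t) (1, 0) (1, 0)) (Set.Icc a b) x :=
      h2.congr (fun y hy => (hux_eq hy ht).symm) (hux_eq hx ht).symm
    have h4 : HasDerivWithinAt (fun y => ux y t) (uxx x t) (Set.Icc a b) x :=
      (huxx x hx t ht).hasDerivWithinAt
    rw [← h4.derivWithin (uniqueDiffOn_Icc hab x hx),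
      h3.derivWithin (uniqueDiffOn_Icc hab x hx)]
  -- continuity on Q of all basic fields
  have hcu : ContinuousOn (fun p : ℝ × ℝ => u p.1 p.2) Q := hC2.continuousOn
  have hcux : ContinuousOn (fun p : ℝ × ℝ => ux p.1 p.2) Q := by
    apply (hLcont.clm_apply continuousOn_const).congr
    intro p hp
    have := hux_eq (hp.1 : p.1 ∈ Set.Icc a b) hp.2
    simpa using this.symm
  have hcut : ContinuousOn (fun p : ℝ × ℝ => ut p.1 p.2) Q := by
    apply (hLcont.clm_apply continuousOn_const).congr
    intro p hp
    have := hut_eq (hp.1 : p.1 ∈ Set.Icc a b) hp.2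
    simpa using this.symm
  have hcm : ContinuousOn (fun p : ℝ × ℝ => m p.1 p.2) Q := by
    have h : ContinuousOn (fun p : ℝ × ℝ => M p ((0:ℝ), (1:ℝ)) ((1:ℝ), (0:ℝ))) Q :=
      (hMcont.clm_apply continuousOn_const).clm_apply continuousOn_const
    exact h.congr (fun p hp => by simp [hmdef])
  have hcutt : ContinuousOn (fun p : ℝ × ℝ => utt p.1 p.2) Q := by
    have h : ContinuousOn (fun p : ℝ × ℝ => M p ((0:ℝ), (1:ℝ)) ((0:ℝ), (1:ℝ))) Q :=
      (hMcont.clm_apply continuousOn_const).clm_apply continuousOn_const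
    apply h.congr
    intro p hp
    have := hutt_eq (hp.1 : p.1 ∈ Set.Icc a b) hp.2
    simpa using this
  have hcuxx : ContinuousOn (fun p : ℝ × ℝ => uxx p.1 p.2) Q := by
    have h : ContinuousOn (fun p : ℝ × ℝ => M p ((1:ℝ), (0:ℝ)) ((1:ℝ), (0:ℝ))) Q :=
      (hMcont.clm_apply continuousOn_const).clm_apply continuousOn_const
    apply h.congr
    intro p hp
    have := huxx_eq (hp.1 : p.1 ∈ Set.Icc a b) hp.2
    simpa using this
  have hcgu : ContinuousOn (fun p : ℝ × ℝ => g (u p.1 p.2)) Q := hg.comp_continuousOn hcu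
  have hcF' : ContinuousOn (fun p : ℝ × ℝ => deriv F (u p.1 p.2)) Q :=
    (hF.continuous_deriv le_rfl).comp_continuousOn hcu
  have hcF : ContinuousOn (fun p : ℝ × ℝ => F (u p.1 p.2)) Q :=
    hF.continuous.comp_continuousOn hcu
  -- the local energy and dissipation densities
  set e : ℝ → ℝ → ℝ := fun x t =>
    τ / 2 * (ut x t) ^ 2 + ε ^ 2 / 2 * (ux x t) ^ 2 + F (u x t) with hedef
  set D : ℝ → ℝ → ℝ := fun x t =>
    τ * (ut x t * utt x t) + ε ^ 2 * (ux x t * m x t) + deriv F (u x t) * ut x t with hDdef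
  have hce : ContinuousOn (fun p : ℝ × ℝ => e p.1 p.2) Q := by
    exact ((continuousOn_const.mul (hcut.pow 2)).add
      (continuousOn_const.mul (hcux.pow 2))).add hcF
  have hcD : ContinuousOn (fun p : ℝ × ℝ => D p.1 p.2) Q := by
    exact ((continuousOn_const.mul (hcut.mul hcutt)).add
      (continuousOn_const.mul (hcux.mul hcm))).add (hcF'.mul hcut)
  have hcgut2 : ContinuousOn (fun p : ℝ × ℝ => g (u p.1 p.2) * (ut p.1 p.2) ^ 2) Q :=
    hcgu.mul (hcut.pow 2)
  -- slice continuity helpers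
  have hslicet : ∀ f : ℝ × ℝ → ℝ, ContinuousOn f Q → ∀ x ∈ Set.Icc a b,
      ContinuousOn (fun t => f (x, t)) (Set.Ici (0:ℝ)) := by
    intro f hf x hx
    exact hf.comp (continuous_const.prodMk continuous_id).continuousOn
      (fun t ht => hmemQ hx ht)
  have hslicex : ∀ f : ℝ × ℝ → ℝ, ContinuousOn f Q → ∀ t ∈ Set.Ici (0:ℝ),
      ContinuousOn (fun y => f (y, t)) (Set.Icc a b) := by
    intro f hf t ht
    exact hf.comp (continuous_id.prodMk continuous_const).continuousOn
      (fun y hy => hmemQ hy ht)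
  have hE : ∀ T, classicalEnergy F τ ε a b ux ut u T = ∫ x in a..b, e x T :=
    fun T => rfl
  -- the main estimate
  have main : ∀ T₁ T₂ : ℝ, 0 ≤ T₁ → T₁ ≤ T₂ →
      σ * (∫ t in T₁..T₂, ∫ x in a..b, (ut x t) ^ 2)
          ≤ classicalEnergy F τ ε a b ux ut u T₁
            - classicalEnergy F τ ε a b ux ut u T₂ ∧
      0 ≤ σ * ∫ t in T₁..T₂, ∫ x in a..b, (ut x t) ^ 2 := by
    intro T₁ T₂ hT1 hT12
    have hT2 : (0:ℝ) ≤ T₂ := le_trans hT1 hT12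
    have hIcc : Set.Icc T₁ T₂ ⊆ Set.Ici (0:ℝ) := fun s hs => le_trans hT1 hs.1
    have hsubQ : Set.Icc a b ×ˢ Set.Icc T₁ T₂ ⊆ Q := fun p hp => ⟨hp.1, hIcc hp.2⟩
    -- FTC in time at each fixed x
    have keyx : ∀ x ∈ Set.Icc a b, ∫ t in T₁..T₂, D x t = e x T₂ - e x T₁ := by
      intro x hx
      apply integral_eq_sub_of_hasDeriv_right_of_le hT12
      · exact (hslicet _ hce x hx).mono hIcc
      · intro t ht
        have ht0 : 0 < t := lt_of_le_of_lt hT1 ht.1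
        have htI : t ∈ Set.Ici (0:ℝ) := le_of_lt ht0
        have h1 : HasDerivAt (fun s => ut x s) (utt x t) t := hutt x hx t htI
        have h2 : HasDerivAt (fun s => ux x s) (m x t) t :=
          (hux_t hx htI).hasDerivAt (Ici_mem_nhds ht0)
        have h3 : HasDerivAt (fun s => u x s) (ut x t) t := hut x hx t htI
        have h4 : HasDerivAt F (deriv F (u x t)) (u x t) :=
          (hF.differentiable one_ne_zero (u x t)).hasDerivAt
        have h5 : HasDerivAt (fun s => e x s) (D x t) t := by
          have h := (((h1.pow 2).const_mul (τ / 2)).add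
            ((h2.pow 2).const_mul (ε ^ 2 / 2))).add (h4.comp t h3)
          exact h.congr_deriv (by simp only [hDdef]; push_cast; ring)
        exact h5.hasDerivWithinAt
      · apply ContinuousOn.intervalIntegrable
        rw [Set.uIcc_of_le hT12]
        exact (hslicet _ hcD x hx).mono hIcc
    -- energy difference as a double integral
    have hiT : ∀ T ∈ Set.Ici (0:ℝ), IntervalIntegrable (fun x => e x T) volume a b := by
      intro T hT
      apply ContinuousOn.intervalIntegrable
      rw [Set.uIcc_of_le hab.le]
      exact hslicex _ hce T hT
    have h6 : classicalEnergy F τ ε a b ux ut u T₂ - classicalEnergy F τ ε a b ux ut u T₁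
        = ∫ x in a..b, (e x T₂ - e x T₁) := by
      rw [hE, hE, ← intervalIntegral.integral_sub (hiT T₂ hT2) (hiT T₁ hT1)]
    have h7 : ∫ x in a..b, (e x T₂ - e x T₁) = ∫ x in a..b, ∫ t in T₁..T₂, D x t := by
      apply intervalIntegral.integral_congr
      intro x hx
      rw [Set.uIcc_of_le hab.le] at hx
      exact (keyx x hx).symm
    -- Fubini
    have hDint : IntegrableOn (Function.uncurry D)
        (Set.Ioc a b ×ˢ Set.Ioc T₁ T₂) (volume.prod volume) := by
      rw [← Measure.volume_eq_prod]
      have hcont : ContinuousOn (Function.uncurry D) (Set.Icc a b ×ˢ Set.Icc T₁ T₂) :=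
        hcD.mono hsubQ
      exact (hcont.integrableOn_compact (isCompact_Icc.prod isCompact_Icc)).mono_set
        (Set.prod_mono Set.Ioc_subset_Icc_self Set.Ioc_subset_Icc_self)
    have h8 : ∫ x in a..b, ∫ t in T₁..T₂, D x t = ∫ t in T₁..T₂, ∫ x in a..b, D x t := by
      simp_rw [intervalIntegral.integral_of_le hT12, intervalIntegral.integral_of_le hab.le]
      apply MeasureTheory.integral_integral_swap
      rw [Measure.prod_restrict]
      exact hDint
    -- evaluation of the inner space integral for positive times
    have hinner : ∀ t : ℝ, 0 < t →
        ∫ x in a..b, D x t = -∫ x in a..b, g (u x t) * (ut x t) ^ 2 := by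
      intro t ht0
      have htI : t ∈ Set.Ici (0:ℝ) := le_of_lt ht0
      have hphi : ∫ x in a..b, (uxx x t * ut x t + ux x t * m x t)
          = ux b t * ut b t - ux a t * ut a t := by
        apply integral_eq_sub_of_hasDeriv_right_of_le hab.le
        · exact (hslicex _ hcux t htI).mul (hslicex _ hcut t htI)
        · intro x hxo
          have hx : x ∈ Set.Icc a b := Set.Ioo_subset_Icc_self hxo
          have h1 : HasDerivAt (fun y => ux y t) (uxx x t) x := huxx x hx t htI
          have h2 : HasDerivAt (fun y => ut y t) (m x t) x := by
            have h := (hut_x hx htI).hasDerivAt (Icc_mem_nhds hxo.1 hxo.2)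
            rwa [hsymm hx htI] at h
          exact (h1.mul h2).hasDerivWithinAt
        · apply ContinuousOn.intervalIntegrable
          rw [Set.uIcc_of_le hab.le]
          exact ((hslicex _ hcuxx t htI).mul (hslicex _ hcut t htI)).add
            ((hslicex _ hcux t htI).mul (hslicex _ hcm t htI))
      have hbc' := hbc t ht0
      have hD2 : ∀ x ∈ Set.Icc a b,
          D x t = ε ^ 2 * (uxx x t * ut x t + ux x t * m x t)
            - g (u x t) * (ut x t) ^ 2 := by
        intro x hx
        have hp := hpde x hx t htI
        simp only [hDdef]
        linear_combination (ut x t) * hp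
      have int1 : IntervalIntegrable
          (fun x => ε ^ 2 * (uxx x t * ut x t + ux x t * m x t)) volume a b := by
        apply ContinuousOn.intervalIntegrable
        rw [Set.uIcc_of_le hab.le]
        exact continuousOn_const.mul (((hslicex _ hcuxx t htI).mul
          (hslicex _ hcut t htI)).add ((hslicex _ hcux t htI).mul (hslicex _ hcm t htI)))
      have int2 : IntervalIntegrable (fun x => g (u x t) * (ut x t) ^ 2) volume a b := by
        apply ContinuousOn.intervalIntegrable
        rw [Set.uIcc_of_le hab.le]
        exact hslicex _ hcgut2 t htI
      calc ∫ x in a..b, D x t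
          = ∫ x in a..b, (ε ^ 2 * (uxx x t * ut x t + ux x t * m x t)
              - g (u x t) * (ut x t) ^ 2) := by
            apply intervalIntegral.integral_congr
            intro x hx
            rw [Set.uIcc_of_le hab.le] at hx
            exact hD2 x hx
        _ = (∫ x in a..b, ε ^ 2 * (uxx x t * ut x t + ux x t * m x t))
              - ∫ x in a..b, g (u x t) * (ut x t) ^ 2 :=
            intervalIntegral.integral_sub int1 int2
        _ = -∫ x in a..b, g (u x t) * (ut x t) ^ 2 := by
            rw [intervalIntegral.integral_const_mul, hphi, hbc'.1, hbc'.2]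
            ring
    have h9 : ∫ t in T₁..T₂, ∫ x in a..b, D x t
        = -∫ t in T₁..T₂, ∫ x in a..b, g (u x t) * (ut x t) ^ 2 := by
      rw [← intervalIntegral.integral_neg]
      apply intervalIntegral.integral_congr_ae
      apply MeasureTheory.ae_of_all
      intro t' ht'
      rw [Set.uIoc_of_le hT12] at ht'
      exact hinner t' (lt_of_le_of_lt hT1 ht'.1)
    have KEY : classicalEnergy F τ ε a b ux ut u T₁ - classicalEnergy F τ ε a b ux ut u T₂
        = ∫ t in T₁..T₂, ∫ x in a..b, g (u x t) * (ut x t) ^ 2 := by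
      have h := h6.trans (h7.trans (h8.trans h9))
      linarith
    -- comparison of the two double integrals
    have hineq : σ * (∫ t in T₁..T₂, ∫ x in a..b, (ut x t) ^ 2)
        ≤ ∫ t in T₁..T₂, ∫ x in a..b, g (u x t) * (ut x t) ^ 2 := by
      set P : Set (ℝ × ℝ) := Set.Ioc T₁ T₂ ×ˢ Set.Ioc a b with hPdef
      set f₂ : ℝ × ℝ → ℝ := fun p => g (u p.2 p.1) * (ut p.2 p.1) ^ 2 with hf2def
      set f₁ : ℝ × ℝ → ℝ := fun p => (ut p.2 p.1) ^ 2 with hf1def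
      have hswapm : Set.MapsTo Prod.swap (Set.Icc T₁ T₂ ×ˢ Set.Icc a b) Q :=
        fun p hp => ⟨hp.2, hIcc hp.1⟩
      have hc₂ : ContinuousOn f₂ (Set.Icc T₁ T₂ ×ˢ Set.Icc a b) :=
        hcgut2.comp continuous_swap.continuousOn hswapm
      have hc₁ : ContinuousOn f₁ (Set.Icc T₁ T₂ ×ˢ Set.Icc a b) :=
        (hcut.pow 2).comp continuous_swap.continuousOn hswapm
      have hPsub : P ⊆ Set.Icc T₁ T₂ ×ˢ Set.Icc a b :=
        Set.prod_mono Set.Ioc_subset_Icc_self Set.Ioc_subset_Icc_self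
      have hI₂ : IntegrableOn f₂ P (volume.prod volume) := by
        rw [← Measure.volume_eq_prod]
        exact (hc₂.integrableOn_compact (isCompact_Icc.prod isCompact_Icc)).mono_set hPsub
      have hI₁ : IntegrableOn f₁ P (volume.prod volume) := by
        rw [← Measure.volume_eq_prod]
        exact (hc₁.integrableOn_compact (isCompact_Icc.prod isCompact_Icc)).mono_set hPsub
      have e₂ : ∫ t in T₁..T₂, ∫ x in a..b, g (u x t) * (ut x t) ^ 2
          = ∫ p in P, f₂ p ∂(volume.prod volume) := by
        simp_rw [intervalIntegral.integral_of_le hT12, intervalIntegral.integral_of_le hab.le]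
        rw [MeasureTheory.setIntegral_prod _ hI₂]
      have e₁ : ∫ t in T₁..T₂, ∫ x in a..b, (ut x t) ^ 2
          = ∫ p in P, f₁ p ∂(volume.prod volume) := by
        simp_rw [intervalIntegral.integral_of_le hT12, intervalIntegral.integral_of_le hab.le]
        rw [MeasureTheory.setIntegral_prod _ hI₁]
      have hnn : 0 ≤ ∫ p in P, (f₂ p - σ * f₁ p) ∂(volume.prod volume) := by
        apply MeasureTheory.setIntegral_nonneg (measurableSet_Ioc.prod measurableSet_Ioc)
        intro p hp
        have h1 := hglb (u p.2 p.1)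
        have h2 : (0:ℝ) ≤ (ut p.2 p.1) ^ 2 := sq_nonneg _
        simp only [hf2def, hf1def]
        nlinarith
      have hsub' : ∫ p in P, (f₂ p - σ * f₁ p) ∂(volume.prod volume)
          = (∫ p in P, f₂ p ∂(volume.prod volume))
            - σ * ∫ p in P, f₁ p ∂(volume.prod volume) := by
        rw [MeasureTheory.integral_sub hI₂ (hI₁.const_mul σ),
          MeasureTheory.integral_const_mul]
      rw [e₁, e₂]
      linarith
    have hnn2 : 0 ≤ ∫ t in T₁..T₂, ∫ x in a..b, (ut x t) ^ 2 :=
      intervalIntegral.integral_nonneg hT12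
        (fun t _ => intervalIntegral.integral_nonneg hab.le (fun x _ => sq_nonneg _))
    exact ⟨by rw [KEY]; exact hineq, mul_nonneg hσ.le hnn2⟩
  refine ⟨main, fun T₁ hT₁ T₂ hT₂ h12 => ?_⟩
  have h := main T₁ T₂ hT₁ h12
  linarith [h.1, h.2]
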